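/- Let p ≥ 1, N ≥ 2p−1, and let a_0,…,a_N : I → ℂ be differentiable nowhere-vanishing functions on an interval I solving the finite Bogoyavlensky lattice a_i' = a_i(∏_{j=1}^p a_{i+j} − ∏_{j=1}^p a_{i−j}) for i = 0,…,N (with a_l ≡ 0 for l < 0 and l > N). Let S_k^m(t) := (L1_N(t)^k)_{m−1,0}. For 1 ≤ l ≤ p set k_l = ⌊(N+1+l)/p⌋, m_l = ((N+1+l) mod p)+1, and for 0 ≤ v ≤ N+1 set k̂_v = ⌊(N+l−v)/p⌋, m̂_v = ((N+l−v) mod p)+1. Suppose D_0,…,D_{N+1} : I → ℂ are differentiable and satisfy S_{k_l+k}^{m_l}(t) = Σ_{v=0}^{N+1} D_v(t)·S_{k̂_v+k}^{m̂_v}(t) for all integers k ≥ 0, all 1 ≤ l ≤ p, and all t ∈ I, and suppose Δ_{N+1}(t) ≠ 0 for all t ∈ I, where Δ_{N+1}(t) = det(α_{ij}(t))_{i,j=0}^{N+1} with α_{ij} = S_{⌊i/p⌋+j}^{(i mod p)+1}. Then each D_v is constant on I (i.e., D_0,…,D_{N+1} are first integrals of the lattice). -/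

import Mathlib

open scoped BigOperators

noncomputable section

/-- The `(N+2)×(N+2)` matrix `L1_N`: `(L1_N)_{i,i+p} = 1`, `(L1_N)_{i+1,i} = a_i`,
all other entries zero. -/
def L1N (p N : ℕ) (a : ℕ → ℂ) : Matrix (Fin (N + 2)) (Fin (N + 2)) ℂ :=
  Matrix.of fun i j => if (j : ℕ) = (i : ℕ) + p then 1
    else if (i : ℕ) = (j : ℕ) + 1 then a (j : ℕ) else 0

/-- The moments of `L1_N`: `S_k^m = (L1_N^k)_{m−1,0}`. -/
def momL1N (p N : ℕ) (a : ℕ → ℂ) (k m : ℕ) : ℂ :=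
  (L1N p N a ^ k) (Fin.ofNat (N + 2) (m - 1 : ℕ)) (Fin.ofNat (N + 2) (0 : ℕ))

/-- auxiliary matrix for the Lax pair -/
def Mmat (p N : ℕ) (b : ℤ → ℂ) : Matrix (Fin (N + 2)) (Fin (N + 2)) ℂ :=
  Matrix.of fun i j => if (i : ℕ) = (j : ℕ) + (p + 1) then
    ∏ s ∈ Finset.range (p + 1), b ((j : ℕ) + s) else 0

lemma fin_sum_ite_eq {n : ℕ} (P : Fin n → Prop) [DecidablePred P] (f : Fin n → ℂ)
    (m : Fin n) (hm : ∀ k, P k ↔ k = m) :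
    (∑ k, if P k then f k else 0) = f m := by
  have h : ∀ k : Fin n, (if P k then f k else 0) = if k = m then f k else 0 := by
    intro k; simp [hm]
  rw [Finset.sum_congr rfl fun k _ => h k]
  simp

lemma fin_sum_ite_false {n : ℕ} (P : Fin n → Prop) [DecidablePred P] (f : Fin n → ℂ)
    (hm : ∀ k, ¬ P k) : (∑ k, if P k then f k else 0) = 0 := by
  apply Finset.sum_eq_zero; intro k _; simp [hm k]

lemma prod_shift_gen (f : ℕ → ℂ) (p : ℕ) :
    ∏ s ∈ Finset.range p, f (s + 1) = ∏ s ∈ Finset.Icc 1 p, f s := by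
  induction p with
  | zero => simp
  | succ q ih => rw [Finset.prod_range_succ, ih, Finset.prod_Icc_succ_top (by omega)]

lemma prod_plus (b : ℤ → ℂ) (p m : ℕ) :
    ∏ s ∈ Finset.range (p + 1), b ((m : ℤ) + (s : ℕ)) =
      b (m : ℕ) * ∏ s ∈ Finset.Icc 1 p, b ((m : ℤ) + (s : ℤ)) := by
  rw [Finset.prod_range_succ']
  rw [prod_shift_gen (fun s => b ((m : ℤ) + (s : ℕ))) p]
  rw [mul_comm]
  norm_num

lemma prod_minus (b : ℤ → ℂ) (p m : ℕ) (hpm : p ≤ m) :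
    ∏ s ∈ Finset.range (p + 1), b (((m - p : ℕ) : ℤ) + (s : ℕ)) =
      b (m : ℕ) * ∏ s ∈ Finset.Icc 1 p, b ((m : ℤ) - (s : ℤ)) := by
  rw [Finset.prod_range_succ]
  have h1 : (((m - p : ℕ) : ℤ) + (p : ℕ)) = (m : ℤ) := by omega
  rw [h1, mul_comm]
  congr 1
  rw [← prod_shift_gen (fun s => b ((m : ℤ) - (s : ℤ))) p]
  rw [← Finset.prod_range_reflect]
  apply Finset.prod_congr rfl
  intro s hs
  have hs' : s < p := Finset.mem_range.mp hs
  congr 1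
  omega

lemma lax_entry (p N : ℕ) (hp : 1 ≤ p) (b : ℤ → ℂ)
    (hb0 : ∀ l : ℤ, l < 0 ∨ (N : ℤ) < l → b l = 0) :
    L1N p N (fun n : ℕ => b n) * Mmat p N b - Mmat p N b * L1N p N (fun n : ℕ => b n)
      = Matrix.of fun i j : Fin (N + 2) =>
          if (i : ℕ) = (j : ℕ) + 1 then
            b (j : ℕ) * (∏ s ∈ Finset.Icc 1 p, b ((j : ℕ) + (s : ℤ)) -
              ∏ s ∈ Finset.Icc 1 p, b ((j : ℕ) - (s : ℤ))) else 0 := by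
  ext i j
  have hLM : (L1N p N (fun n : ℕ => b n) * Mmat p N b) i j
      = if h : (j : ℕ) + (p + 1) < N + 2 then
          L1N p N (fun n : ℕ => b n) i ⟨(j : ℕ) + (p + 1), h⟩ *
            ∏ s ∈ Finset.range (p + 1), b ((j : ℕ) + s) else 0 := by
    rw [Matrix.mul_apply]
    have h1 : ∀ k : Fin (N + 2), L1N p N (fun n : ℕ => b n) i k * Mmat p N b k j
        = if (k : ℕ) = (j : ℕ) + (p + 1) then
            L1N p N (fun n : ℕ => b n) i k * ∏ s ∈ Finset.range (p + 1), b ((j : ℕ) + s)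
          else 0 := by
      intro k
      simp only [Mmat, Matrix.of_apply, mul_ite, mul_zero]
    rw [Finset.sum_congr rfl fun k _ => h1 k]
    split_ifs with h
    · exact fin_sum_ite_eq _ _ ⟨(j : ℕ) + (p + 1), h⟩ (fun k => by
        constructor
        · intro hk; exact Fin.ext hk
        · intro hk; subst hk; rfl)
    · exact fin_sum_ite_false _ _ (fun k hk => by have := k.isLt; omega)
  have hML : (Mmat p N b * L1N p N (fun n : ℕ => b n)) i j
      = if h : p + 1 ≤ (i : ℕ) then
          (∏ s ∈ Finset.range (p + 1), b ((((i : ℕ) - (p + 1) : ℕ) : ℤ) + (s : ℤ))) *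
            L1N p N (fun n : ℕ => b n) ⟨(i : ℕ) - (p + 1), by omega⟩ j else 0 := by
    rw [Matrix.mul_apply]
    have h1 : ∀ k : Fin (N + 2), Mmat p N b i k * L1N p N (fun n : ℕ => b n) k j
        = if (i : ℕ) = (k : ℕ) + (p + 1) then
            (∏ s ∈ Finset.range (p + 1), b ((k : ℕ) + s)) * L1N p N (fun n : ℕ => b n) k j
          else 0 := by
      intro k
      simp only [Mmat, Matrix.of_apply, ite_mul, zero_mul]
    rw [Finset.sum_congr rfl fun k _ => h1 k]
    split_ifs with h
    · rw [fin_sum_ite_eq _ _ ⟨(i : ℕ) - (p + 1), by omega⟩ (fun k => by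
        rw [Fin.ext_iff]; simp only []; omega)]
    · exact fin_sum_ite_false _ _ (fun k hk => by omega)
  rw [Matrix.sub_apply, hLM, hML, Matrix.of_apply]
  by_cases hij1 : (i : ℕ) = (j : ℕ) + 1
  · -- main diagonal case
    rw [if_pos hij1]
    have e1 : (if h : (j : ℕ) + (p + 1) < N + 2 then
          L1N p N (fun n : ℕ => b n) i ⟨(j : ℕ) + (p + 1), h⟩ *
            ∏ s ∈ Finset.range (p + 1), b ((j : ℕ) + s) else 0)
        = b (j : ℕ) * ∏ s ∈ Finset.Icc 1 p, b ((j : ℕ) + (s : ℤ)) := by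
      split_ifs with h
      · have hL : L1N p N (fun n : ℕ => b n) i ⟨(j : ℕ) + (p + 1), h⟩ = 1 := by
          simp only [L1N, Matrix.of_apply, Fin.val_mk]
          rw [if_pos (by omega)]
        rw [hL, one_mul, prod_plus]
      · rw [Finset.prod_eq_zero (Finset.mem_Icc.mpr ⟨hp, le_refl p⟩)
          (hb0 _ (Or.inr (by push_cast; omega))), mul_zero]
    have e2 : (if h : p + 1 ≤ (i : ℕ) then
          (∏ s ∈ Finset.range (p + 1), b ((((i : ℕ) - (p + 1) : ℕ) : ℤ) + (s : ℤ))) *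
            L1N p N (fun n : ℕ => b n) ⟨(i : ℕ) - (p + 1), by omega⟩ j else 0)
        = b (j : ℕ) * ∏ s ∈ Finset.Icc 1 p, b ((j : ℕ) - (s : ℤ)) := by
      split_ifs with h
      · have hL : L1N p N (fun n : ℕ => b n) ⟨(i : ℕ) - (p + 1), by omega⟩ j = 1 := by
          simp only [L1N, Matrix.of_apply, Fin.val_mk]
          rw [if_pos (by omega)]
        rw [hL, mul_one]
        have harg : (i : ℕ) - (p + 1) = (j : ℕ) - p := by omega
        rw [harg, prod_minus b p (j : ℕ) (by omega)]
      · rw [Finset.prod_eq_zero (Finset.mem_Icc.mpr ⟨by omega, by omega⟩ :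
            (j : ℕ) + 1 ∈ Finset.Icc 1 p)
          (hb0 _ (Or.inl (by push_cast; omega))), mul_zero]
    rw [e1, e2]; ring
  · by_cases hij2 : (i : ℕ) = (j : ℕ) + (p + 2)
    · -- cancelling case
      rw [if_neg hij1]
      rw [dif_pos (show (j : ℕ) + (p + 1) < N + 2 by omega),
          dif_pos (show p + 1 ≤ (i : ℕ) by omega)]
      have hL1 : L1N p N (fun n : ℕ => b n) i ⟨(j : ℕ) + (p + 1), by omega⟩
          = b (((j : ℕ) + (p + 1) : ℕ)) := by
        simp only [L1N, Matrix.of_apply, Fin.val_mk]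
        rw [if_neg (by omega), if_pos (by omega)]
      have hL2 : L1N p N (fun n : ℕ => b n) ⟨(i : ℕ) - (p + 1), by omega⟩ j
          = b ((j : ℕ)) := by
        simp only [L1N, Matrix.of_apply, Fin.val_mk]
        rw [if_neg (by omega), if_pos (by omega)]
      rw [hL1, hL2]
      have harg : (i : ℕ) - (p + 1) = (j : ℕ) + 1 := by omega
      rw [harg]
      rw [Finset.prod_range_succ', Finset.prod_range_succ]
      have e3 : ∀ s ∈ Finset.range p, b ((((j : ℕ) : ℤ)) + ((s + 1 : ℕ) : ℤ))
          = b ((((j : ℕ) + 1 : ℕ) : ℤ) + (s : ℤ)) := by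
        intro s _; congr 1; push_cast; ring
      rw [Finset.prod_congr rfl e3]
      have e4 : ((((j : ℕ) : ℤ)) + ((0 : ℕ) : ℤ)) = (((j : ℕ) : ℤ)) := by push_cast; ring
      have e5 : ((((j : ℕ) + 1 : ℕ) : ℤ) + ((p : ℕ) : ℤ)) = (((j : ℕ) + (p + 1) : ℕ) : ℤ) := by
        push_cast; ring
      rw [e4, e5]
      ring
    · -- zero case
      rw [if_neg hij1]
      have z1 : (if h : (j : ℕ) + (p + 1) < N + 2 then
          L1N p N (fun n : ℕ => b n) i ⟨(j : ℕ) + (p + 1), h⟩ *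
            ∏ s ∈ Finset.range (p + 1), b ((j : ℕ) + s) else 0) = 0 := by
        split_ifs with h
        · have hL : L1N p N (fun n : ℕ => b n) i ⟨(j : ℕ) + (p + 1), h⟩ = 0 := by
            simp only [L1N, Matrix.of_apply, Fin.val_mk]
            rw [if_neg (by omega), if_neg (by omega)]
          rw [hL, zero_mul]
        · rfl
      have z2 : (if h : p + 1 ≤ (i : ℕ) then
          (∏ s ∈ Finset.range (p + 1), b ((((i : ℕ) - (p + 1) : ℕ) : ℤ) + (s : ℤ))) *
            L1N p N (fun n : ℕ => b n) ⟨(i : ℕ) - (p + 1), by omega⟩ j else 0) = 0 := by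
        split_ifs with h
        · have hL : L1N p N (fun n : ℕ => b n) ⟨(i : ℕ) - (p + 1), by omega⟩ j = 0 := by
            simp only [L1N, Matrix.of_apply, Fin.val_mk]
            rw [if_neg (by omega), if_neg (by omega)]
          rw [hL, mul_zero]
        · rfl
      rw [z1, z2, sub_zero]

lemma pow_col0 (p N : ℕ) (b : ℤ → ℂ) (s : ℕ) (hs : s ≤ p) (hpN : p ≤ N) :
    ∀ j : Fin (N + 2), ((L1N p N fun n : ℕ => b n) ^ s) j (Fin.ofNat (N + 2) (0 : ℕ)) =
      if (j : ℕ) = s then ∏ i ∈ Finset.range s, b i else 0 := by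
  induction s with
  | zero =>
    intro j
    rw [pow_zero, Matrix.one_apply]
    have h0 : ((Fin.ofNat (N + 2) (0 : ℕ)) : ℕ) = 0 := rfl
    by_cases hj : (j : ℕ) = 0
    · rw [if_pos (by rw [Fin.ext_iff, h0]; exact hj), if_pos hj]; simp
    · rw [if_neg (by rw [Fin.ext_iff, h0]; exact hj), if_neg hj]
  | succ q ih =>
    intro j
    rw [pow_succ', Matrix.mul_apply]
    have h1 : ∀ k : Fin (N + 2), (L1N p N fun n : ℕ => b n) j k *
        ((L1N p N fun n : ℕ => b n) ^ q) k (Fin.ofNat (N + 2) (0 : ℕ))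
        = if (k : ℕ) = q then (L1N p N fun n : ℕ => b n) j k * ∏ i ∈ Finset.range q, b i
          else 0 := by
      intro k
      rw [ih (by omega) k]
      simp only [mul_ite, mul_zero]
    rw [Finset.sum_congr rfl fun k _ => h1 k]
    rw [fin_sum_ite_eq _ _ ⟨q, by omega⟩ (fun k => by rw [Fin.ext_iff])]
    have hL : (L1N p N fun n : ℕ => b n) j ⟨q, by omega⟩
        = if (j : ℕ) = q + 1 then b (q : ℕ) else 0 := by
      simp only [L1N, Matrix.of_apply, Fin.val_mk]
      rw [if_neg (by omega)]
    rw [hL]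
    split_ifs with h
    · rw [Finset.prod_range_succ]; ring
    · rw [zero_mul]

lemma pow_colp1 (p N : ℕ) (hp : 1 ≤ p) (hpN : p ≤ N) (b : ℤ → ℂ) (j : Fin (N + 2)) :
    ((L1N p N fun n : ℕ => b n) ^ (p + 1)) j (Fin.ofNat (N + 2) (0 : ℕ)) =
      if (j : ℕ) = 0 then ∏ i ∈ Finset.range p, b i
      else if (j : ℕ) = p + 1 then ∏ i ∈ Finset.range (p + 1), b i else 0 := by
  rw [pow_succ', Matrix.mul_apply]
  have h1 : ∀ k : Fin (N + 2), (L1N p N fun n : ℕ => b n) j k *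
      ((L1N p N fun n : ℕ => b n) ^ p) k (Fin.ofNat (N + 2) (0 : ℕ))
      = if (k : ℕ) = p then (L1N p N fun n : ℕ => b n) j k * ∏ i ∈ Finset.range p, b i
        else 0 := by
    intro k
    rw [pow_col0 p N b p (le_refl p) hpN k]
    simp only [mul_ite, mul_zero]
  rw [Finset.sum_congr rfl fun k _ => h1 k]
  rw [fin_sum_ite_eq _ _ ⟨p, by omega⟩ (fun k => by rw [Fin.ext_iff])]
  have hL : (L1N p N fun n : ℕ => b n) j ⟨p, by omega⟩
      = if (j : ℕ) = 0 then 1 else if (j : ℕ) = p + 1 then b (p : ℕ) else 0 := by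
    simp only [L1N, Matrix.of_apply, Fin.val_mk]
    by_cases hj : (j : ℕ) = 0
    · rw [if_pos (by omega), if_pos hj]
    · rw [if_neg (by omega), if_neg hj]
  rw [hL]
  split_ifs with h h'
  · rw [one_mul]
  · rw [Finset.prod_range_succ]; ring
  · rw [zero_mul]

lemma pow_shift (p N : ℕ) (hp : 1 ≤ p) (hpN : p ≤ N) (b : ℤ → ℂ) (k : ℕ) (r : Fin (N + 2)) :
    ((L1N p N fun n : ℕ => b n) ^ (k + (p + 1))) r (Fin.ofNat (N + 2) (0 : ℕ)) =
      (∏ i ∈ Finset.range p, b i) *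
          ((L1N p N fun n : ℕ => b n) ^ k) r (Fin.ofNat (N + 2) (0 : ℕ)) +
        (∏ i ∈ Finset.range (p + 1), b i) *
          ((L1N p N fun n : ℕ => b n) ^ k) r ⟨p + 1, by omega⟩ := by
  rw [pow_add, Matrix.mul_apply]
  have h1 : ∀ m : Fin (N + 2), ((L1N p N fun n : ℕ => b n) ^ k) r m *
      ((L1N p N fun n : ℕ => b n) ^ (p + 1)) m (Fin.ofNat (N + 2) (0 : ℕ))
      = (if (m : ℕ) = 0 then ((L1N p N fun n : ℕ => b n) ^ k) r m *
            ∏ i ∈ Finset.range p, b i else 0)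
        + (if (m : ℕ) = p + 1 then ((L1N p N fun n : ℕ => b n) ^ k) r m *
            ∏ i ∈ Finset.range (p + 1), b i else 0) := by
    intro m
    rw [pow_colp1 p N hp hpN b m]
    split_ifs with h h'
    · omega
    · ring
    · ring
    · ring
  rw [Finset.sum_congr rfl fun m _ => h1 m, Finset.sum_add_distrib]
  rw [fin_sum_ite_eq _ _ ⟨0, by omega⟩ (fun m => by rw [Fin.ext_iff]),
    fin_sum_ite_eq _ _ ⟨p + 1, by omega⟩ (fun m => by rw [Fin.ext_iff])]
  have h0 : (Fin.ofNat (N + 2) (0 : ℕ)) = ⟨0, by omega⟩ := rfl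
  rw [h0]
  ring

lemma hasDeriv_L_entry (p N : ℕ) (hp : 1 ≤ p) (I : Set ℝ) (a : ℤ → ℝ → ℂ)
    (haout : ∀ l : ℤ, l < 0 ∨ (N : ℤ) < l → ∀ t : ℝ, a l t = 0)
    (haode : ∀ i : ℤ, 0 ≤ i → i ≤ (N : ℤ) → ∀ t ∈ I, HasDerivWithinAt (a i)
      (a i t * (∏ j ∈ Finset.Icc 1 p, a (i + (j : ℤ)) t -
        ∏ j ∈ Finset.Icc 1 p, a (i - (j : ℤ)) t)) I t)
    (x : ℝ) (hx : x ∈ I) (i j : Fin (N + 2)) :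
    HasDerivWithinAt (fun t => L1N p N (fun n : ℕ => a n t) i j)
      ((L1N p N (fun n : ℕ => a n x) * Mmat p N (fun l => a l x)
        - Mmat p N (fun l => a l x) * L1N p N (fun n : ℕ => a n x)) i j) I x := by
  have hb0 : ∀ l : ℤ, l < 0 ∨ (N : ℤ) < l → (fun l => a l x) l = 0 := fun l hl => haout l hl x
  rw [lax_entry p N hp _ hb0]
  simp only [L1N, Matrix.of_apply]
  by_cases hji : (j : ℕ) = (i : ℕ) + p
  · simp only [if_pos hji]
    rw [if_neg (by omega)]
    exact hasDerivWithinAt_const x I 1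
  · simp only [if_neg hji]
    by_cases hij : (i : ℕ) = (j : ℕ) + 1
    · simp only [if_pos hij]
      exact haode ((j : ℕ) : ℤ) (by positivity) (by have := j.isLt; omega) x hx
    · simp only [if_neg hij]
      exact hasDerivWithinAt_const x I 0

lemma hasDeriv_pow_entry (p N : ℕ) (hp : 1 ≤ p) (I : Set ℝ) (a : ℤ → ℝ → ℂ)
    (haout : ∀ l : ℤ, l < 0 ∨ (N : ℤ) < l → ∀ t : ℝ, a l t = 0)
    (haode : ∀ i : ℤ, 0 ≤ i → i ≤ (N : ℤ) → ∀ t ∈ I, HasDerivWithinAt (a i)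
      (a i t * (∏ j ∈ Finset.Icc 1 p, a (i + (j : ℤ)) t -
        ∏ j ∈ Finset.Icc 1 p, a (i - (j : ℤ)) t)) I t)
    (x : ℝ) (hx : x ∈ I) (k : ℕ) :
    ∀ i j : Fin (N + 2), HasDerivWithinAt (fun t => (L1N p N (fun n : ℕ => a n t) ^ k) i j)
      ((L1N p N (fun n : ℕ => a n x) ^ k * Mmat p N (fun l => a l x)
        - Mmat p N (fun l => a l x) * L1N p N (fun n : ℕ => a n x) ^ k) i j) I x := by
  induction k with
  | zero =>
    intro i j
    simp only [pow_zero]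
    set M := Mmat p N (fun l => a l x) with hM
    have hv : ((1 : Matrix (Fin (N + 2)) (Fin (N + 2)) ℂ) * M - M * (1 : Matrix (Fin (N + 2)) (Fin (N + 2)) ℂ)) i j = (0 : ℂ) := by
      rw [one_mul, mul_one, sub_self, Matrix.zero_apply]
    rw [hv]
    exact hasDerivWithinAt_const x I _
  | succ k ih =>
    intro i j
    have hfun : (fun t => (L1N p N (fun n : ℕ => a n t) ^ (k + 1)) i j)
        = fun t => ∑ m : Fin (N + 2), (L1N p N (fun n : ℕ => a n t) ^ k) i m *
            L1N p N (fun n : ℕ => a n t) m j := by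
      funext t; rw [pow_succ, Matrix.mul_apply]
    rw [hfun]
    set L := L1N p N (fun n : ℕ => a n x) with hL
    set M := Mmat p N (fun l => a l x) with hM
    have hsum : HasDerivWithinAt (fun t => ∑ m : Fin (N + 2),
        (L1N p N (fun n : ℕ => a n t) ^ k) i m * L1N p N (fun n : ℕ => a n t) m j)
        (∑ m : Fin (N + 2), ((L ^ k * M - M * L ^ k) i m * L m j
          + (L ^ k) i m * ((L * M - M * L) m j))) I x :=
      HasDerivWithinAt.fun_sum (fun m _ =>
        (ih i m).mul (hasDeriv_L_entry p N hp I a haout haode x hx m j))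
    have hval : (∑ m : Fin (N + 2), ((L ^ k * M - M * L ^ k) i m * L m j
          + (L ^ k) i m * ((L * M - M * L) m j)))
        = (L ^ (k + 1) * M - M * L ^ (k + 1)) i j := by
      have hmat : (L ^ k * M - M * L ^ k) * L + L ^ k * (L * M - M * L)
          = L ^ (k + 1) * M - M * L ^ (k + 1) := by
        rw [pow_succ]; noncomm_ring
      calc (∑ m : Fin (N + 2), ((L ^ k * M - M * L ^ k) i m * L m j
            + (L ^ k) i m * ((L * M - M * L) m j)))
          = ((L ^ k * M - M * L ^ k) * L) i j + (L ^ k * (L * M - M * L)) i j := by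
            rw [Matrix.mul_apply, Matrix.mul_apply, ← Finset.sum_add_distrib]
        _ = ((L ^ k * M - M * L ^ k) * L + L ^ k * (L * M - M * L)) i j := by
            rw [Matrix.add_apply]
        _ = _ := by rw [hmat]
    rw [← hval]
    exact hsum

lemma momT (p N : ℕ) (hp : 1 ≤ p) (b : ℕ → ℂ) (q k : ℕ) :
    momL1N p N b (q / p + k) (q % p + 1) = momL1N p N b ((q + p * k) / p) ((q + p * k) % p + 1) := by
  rw [Nat.add_mul_div_left _ _ (by omega : 0 < p), Nat.add_mul_mod_self_left]

lemma hasDeriv_mom (p N : ℕ) (hp : 1 ≤ p) (hpN : p ≤ N) (I : Set ℝ) (a : ℤ → ℝ → ℂ)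
    (haout : ∀ l : ℤ, l < 0 ∨ (N : ℤ) < l → ∀ t : ℝ, a l t = 0)
    (haode : ∀ i : ℤ, 0 ≤ i → i ≤ (N : ℤ) → ∀ t ∈ I, HasDerivWithinAt (a i)
      (a i t * (∏ j ∈ Finset.Icc 1 p, a (i + (j : ℤ)) t -
        ∏ j ∈ Finset.Icc 1 p, a (i - (j : ℤ)) t)) I t)
    (x : ℝ) (hx : x ∈ I) (n : ℕ) :
    HasDerivWithinAt (fun t => momL1N p N (fun m : ℕ => a m t) (n / p) (n % p + 1))
      (momL1N p N (fun m : ℕ => a m x) ((n + p * (p + 1)) / p) ((n + p * (p + 1)) % p + 1)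
        - (∏ i ∈ Finset.range p, a i x) *
          momL1N p N (fun m : ℕ => a m x) (n / p) (n % p + 1)) I x := by
  simp only [momL1N, Nat.add_sub_cancel]
  set L := L1N p N (fun m : ℕ => a m x) with hLdef
  set M := Mmat p N (fun l => a l x) with hMdef
  set r : Fin (N + 2) := (Fin.ofNat (N + 2) (n % p : ℕ)) with hrdef
  set z : Fin (N + 2) := (Fin.ofNat (N + 2) (0 : ℕ)) with hzdef
  have hz0 : (z : ℕ) = 0 := rfl
  have hrv : (r : ℕ) = n % p := by
    rw [hrdef, Fin.val_ofNat, Nat.mod_eq_of_lt (by have := Nat.mod_lt n (show 0 < p by omega); omega)]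
  have hder := hasDeriv_pow_entry p N hp I a haout haode x hx (n / p) r z
  have hMX : (M * L ^ (n / p)) r z = 0 := by
    rw [Matrix.mul_apply]
    apply Finset.sum_eq_zero
    intro m _
    have hMrm : M r m = 0 := by
      rw [hMdef]
      simp only [Mmat, Matrix.of_apply]
      rw [if_neg (by have := Nat.mod_lt n (show 0 < p by omega); omega)]
    rw [hMrm, zero_mul]
  have hXM : (L ^ (n / p) * M) r z
      = (L ^ (n / p)) r ⟨p + 1, by omega⟩ * ∏ i ∈ Finset.range (p + 1), a i x := by
    rw [Matrix.mul_apply]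
    have h1 : ∀ m : Fin (N + 2), (L ^ (n / p)) r m * M m z
        = if (m : ℕ) = p + 1 then (L ^ (n / p)) r m * ∏ i ∈ Finset.range (p + 1), a i x
          else 0 := by
      intro m
      rw [hMdef]
      simp only [Mmat, Matrix.of_apply, hz0, Nat.cast_zero, zero_add, mul_ite, mul_zero]
    rw [Finset.sum_congr rfl fun m _ => h1 m]
    exact fin_sum_ite_eq _ _ ⟨p + 1, by omega⟩ (fun m => by rw [Fin.ext_iff])
  have hshift : (L ^ (n / p + (p + 1))) r z
      = (∏ i ∈ Finset.range p, (fun l : ℤ => a l x) i) * (L ^ (n / p)) r z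
        + (∏ i ∈ Finset.range (p + 1), (fun l : ℤ => a l x) i) * (L ^ (n / p)) r ⟨p + 1, by omega⟩ :=
    pow_shift p N hp hpN (fun l => a l x) (n / p) r
  have hidx1 : (n + p * (p + 1)) / p = n / p + (p + 1) :=
    Nat.add_mul_div_left _ _ (by omega : 0 < p)
  have hidx2 : (n + p * (p + 1)) % p = n % p := Nat.add_mul_mod_self_left n p (p+1)
  rw [hidx1, hidx2]
  have hval : (L ^ (n / p) * M - M * L ^ (n / p)) r z
      = (L ^ (n / p + (p + 1))) r z - (∏ i ∈ Finset.range p, a i x) * (L ^ (n / p)) r z := by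
    rw [Matrix.sub_apply, hMX, hXM, hshift]
    simp only []
    ring
  rw [← hval]
  exact hder

/-- The finite rank coefficients `D_0, …, D_{N+1}` are first integrals of the finite
Bogoyavlensky lattice `a_i' = a_i (∏_{j=1}^p a_{i+j} − ∏_{j=1}^p a_{i−j})`. -/
theorem FRC_D_first_integrals (p N : ℕ) (hp : 1 ≤ p) (hN : 2 * p - 1 ≤ N)
    (I : Set ℝ) (hI : I.OrdConnected)
    (a : ℤ → ℝ → ℂ)
    (haout : ∀ l : ℤ, l < 0 ∨ (N : ℤ) < l → ∀ t : ℝ, a l t = 0)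
    (hane : ∀ i : ℤ, 0 ≤ i → i ≤ (N : ℤ) → ∀ t ∈ I, a i t ≠ 0)
    (haode : ∀ i : ℤ, 0 ≤ i → i ≤ (N : ℤ) → ∀ t ∈ I, HasDerivWithinAt (a i)
      (a i t * (∏ j ∈ Finset.Icc 1 p, a (i + (j : ℤ)) t -
        ∏ j ∈ Finset.Icc 1 p, a (i - (j : ℤ)) t)) I t)
    (D : ℕ → ℝ → ℂ)
    (hDdiff : ∀ v, v ≤ N + 1 → ∀ t ∈ I, DifferentiableWithinAt ℝ (D v) I t)
    (hDrel : ∀ k : ℕ, ∀ l, 1 ≤ l → l ≤ p → ∀ t ∈ I,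
      momL1N p N (fun n : ℕ => a (n : ℤ) t) ((N + 1 + l) / p + k) ((N + 1 + l) % p + 1) =
        ∑ v ∈ Finset.range (N + 2), D v t *
          momL1N p N (fun n : ℕ => a (n : ℤ) t) ((N + l - v) / p + k) ((N + l - v) % p + 1))
    (hΔ : ∀ t ∈ I, Matrix.det (Matrix.of fun i j : Fin (N + 2) =>
        momL1N p N (fun n : ℕ => a (n : ℤ) t) ((i : ℕ) / p + (j : ℕ)) ((i : ℕ) % p + 1)) ≠ 0) :
    ∀ v, v ≤ N + 1 → ∀ t ∈ I, ∀ s ∈ I, D v t = D v s := by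
  have hpN : p ≤ N := by omega
  -- flat relation
  have flatrel : ∀ n : ℕ, N + 2 ≤ n → ∀ u ∈ I,
      momL1N p N (fun m : ℕ => a (m : ℤ) u) (n / p) (n % p + 1)
        = ∑ w ∈ Finset.range (N + 2), D w u *
            momL1N p N (fun m : ℕ => a (m : ℤ) u) ((n - 1 - w) / p) ((n - 1 - w) % p + 1) := by
    intro n hn u hu
    have hmod := Nat.mod_lt (n - (N + 2)) (show 0 < p by omega)
    have hdm := Nat.div_add_mod (n - (N + 2)) p
    set k := (n - (N + 2)) / p with hk
    set l := (n - (N + 2)) % p + 1 with hl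
    have heq : N + 1 + l + p * k = n := by omega
    have hrel := hDrel k l (by omega) (by omega) u hu
    rw [momT p N hp _ (N + 1 + l) k, heq] at hrel
    have hsummand : ∀ w ∈ Finset.range (N + 2),
        D w u * momL1N p N (fun m : ℕ => a (m : ℤ) u) ((N + l - w) / p + k) ((N + l - w) % p + 1)
          = D w u * momL1N p N (fun m : ℕ => a (m : ℤ) u) ((n - 1 - w) / p) ((n - 1 - w) % p + 1) := by
      intro w hw
      have hw' : w < N + 2 := Finset.mem_range.mp hw
      rw [momT p N hp _ (N + l - w) k]
      have hidx : N + l - w + p * k = n - 1 - w := by omega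
      rw [hidx]
    rw [Finset.sum_congr rfl hsummand] at hrel
    exact hrel
  -- zero derivative of D at good points
  have derzero : ∀ x ∈ I, UniqueDiffWithinAt ℝ I x → ∀ w, w ≤ N + 1 →
      derivWithin (D w) I x = 0 := by
    intro x hx hu
    set g : ℕ → ℂ := fun w => derivWithin (D w) I x with hg
    have hkey : ∀ n : ℕ, N + 2 ≤ n → ∑ w ∈ Finset.range (N + 2),
        g w * momL1N p N (fun m : ℕ => a (m : ℤ) x) ((n - 1 - w) / p) ((n - 1 - w) % p + 1)
          = 0 := by
      intro n hn
      have hF := hasDeriv_mom p N hp hpN I a haout haode x hx n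
      have hG : HasDerivWithinAt (fun u => ∑ w ∈ Finset.range (N + 2), D w u *
          momL1N p N (fun m : ℕ => a (m : ℤ) u) ((n - 1 - w) / p) ((n - 1 - w) % p + 1))
          (∑ w ∈ Finset.range (N + 2),
            (g w * momL1N p N (fun m : ℕ => a (m : ℤ) x) ((n - 1 - w) / p) ((n - 1 - w) % p + 1)
              + D w x * (momL1N p N (fun m : ℕ => a (m : ℤ) x)
                  (((n - 1 - w) + p * (p + 1)) / p) (((n - 1 - w) + p * (p + 1)) % p + 1)
                - (∏ i ∈ Finset.range p, a (i : ℤ) x) *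
                  momL1N p N (fun m : ℕ => a (m : ℤ) x) ((n - 1 - w) / p) ((n - 1 - w) % p + 1))))
          I x :=
        HasDerivWithinAt.fun_sum (fun w hw =>
          ((hDdiff w (by have := Finset.mem_range.mp hw; omega) x hx).hasDerivWithinAt).mul
            (hasDeriv_mom p N hp hpN I a haout haode x hx (n - 1 - w)))
      have hFG : HasDerivWithinAt (fun u => ∑ w ∈ Finset.range (N + 2), D w u *
          momL1N p N (fun m : ℕ => a (m : ℤ) u) ((n - 1 - w) / p) ((n - 1 - w) % p + 1))
          (momL1N p N (fun m : ℕ => a (m : ℤ) x)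
              ((n + p * (p + 1)) / p) ((n + p * (p + 1)) % p + 1)
            - (∏ i ∈ Finset.range p, a (i : ℤ) x) *
              momL1N p N (fun m : ℕ => a (m : ℤ) x) (n / p) (n % p + 1)) I x :=
        hF.congr (fun y hy => (flatrel n hn y hy).symm) (flatrel n hn x hx).symm
      have heqd := (hG.derivWithin hu).symm.trans (hFG.derivWithin hu)
      -- now linear algebraic cleanup
      have E1 := flatrel (n + p * (p + 1)) (by omega) x hx
      have E2 := flatrel n hn x hx
      rw [Finset.sum_add_distrib] at heqd
      have hDB : (∑ w ∈ Finset.range (N + 2), D w x *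
            (momL1N p N (fun m : ℕ => a (m : ℤ) x)
                (((n - 1 - w) + p * (p + 1)) / p) (((n - 1 - w) + p * (p + 1)) % p + 1)
              - (∏ i ∈ Finset.range p, a (i : ℤ) x) *
                momL1N p N (fun m : ℕ => a (m : ℤ) x) ((n - 1 - w) / p) ((n - 1 - w) % p + 1)))
          = (∑ w ∈ Finset.range (N + 2), D w x * momL1N p N (fun m : ℕ => a (m : ℤ) x)
                (((n + p * (p + 1)) - 1 - w) / p) (((n + p * (p + 1)) - 1 - w) % p + 1))
            - (∏ i ∈ Finset.range p, a (i : ℤ) x) *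
              (∑ w ∈ Finset.range (N + 2), D w x * momL1N p N (fun m : ℕ => a (m : ℤ) x)
                ((n - 1 - w) / p) ((n - 1 - w) % p + 1)) := by
        rw [Finset.mul_sum, ← Finset.sum_sub_distrib]
        apply Finset.sum_congr rfl
        intro w hw
        have hw' : w < N + 2 := Finset.mem_range.mp hw
        have hidx : (n - 1 - w) + p * (p + 1) = (n + p * (p + 1)) - 1 - w := by omega
        rw [hidx]
        ring
      rw [hDB, ← E1, ← E2] at heqd
      linear_combination heqd
    -- matrix argument
    intro w hw
    set A : Matrix (Fin (N + 2)) (Fin (N + 2)) ℂ := Matrix.of fun i j : Fin (N + 2) =>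
      momL1N p N (fun n : ℕ => a (n : ℤ) x) ((i : ℕ) / p + (j : ℕ)) ((i : ℕ) % p + 1) with hA
    have hdet : A.det ≠ 0 := hΔ x hx
    set gv : Fin (N + 2) → ℂ := fun i => g (N + 1 - (i : ℕ)) with hgv
    have hvm : Matrix.vecMul gv A = 0 := by
      funext jj
      have hexp : Matrix.vecMul gv A jj = ∑ i : Fin (N + 2), gv i * A i jj := by
        simp [Matrix.vecMul, dotProduct]
      rw [hexp]
      have hfin : ∑ i : Fin (N + 2), gv i * A i jj
          = ∑ i ∈ Finset.range (N + 2), g (N + 1 - i) *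
              momL1N p N (fun n : ℕ => a (n : ℤ) x) (i / p + (jj : ℕ)) (i % p + 1) :=
        Fin.sum_univ_eq_sum_range (fun i : ℕ => g (N + 1 - i) *
          momL1N p N (fun n : ℕ => a (n : ℤ) x) (i / p + (jj : ℕ)) (i % p + 1)) (N + 2)
      rw [hfin]
      rw [← Finset.sum_range_reflect]
      have hterm : ∀ i ∈ Finset.range (N + 2),
          g (N + 1 - (N + 2 - 1 - i)) * momL1N p N (fun n : ℕ => a (n : ℤ) x)
            ((N + 2 - 1 - i) / p + (jj : ℕ)) ((N + 2 - 1 - i) % p + 1)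
          = g i * momL1N p N (fun n : ℕ => a (n : ℤ) x)
              (((N + 2 + p * (jj : ℕ)) - 1 - i) / p) (((N + 2 + p * (jj : ℕ)) - 1 - i) % p + 1) := by
        intro i hi
        have hi' : i < N + 2 := Finset.mem_range.mp hi
        have h1 : N + 1 - (N + 2 - 1 - i) = i := by omega
        rw [h1, momT p N hp _ (N + 2 - 1 - i) (jj : ℕ)]
        have h2 : N + 2 - 1 - i + p * (jj : ℕ) = (N + 2 + p * (jj : ℕ)) - 1 - i := by omega
        rw [h2]
      rw [Finset.sum_congr rfl hterm]
      exact hkey (N + 2 + p * (jj : ℕ)) (by omega)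
    have hgv0 : gv = 0 := by
      have hAinv : A * A⁻¹ = 1 := Matrix.mul_nonsing_inv A (Ne.isUnit hdet)
      calc gv = Matrix.vecMul gv 1 := (Matrix.vecMul_one gv).symm
        _ = Matrix.vecMul gv (A * A⁻¹) := by rw [hAinv]
        _ = Matrix.vecMul (Matrix.vecMul gv A) A⁻¹ := (Matrix.vecMul_vecMul gv A A⁻¹).symm
        _ = Matrix.vecMul 0 A⁻¹ := by rw [hvm]
        _ = 0 := Matrix.zero_vecMul _
    have hval := congrFun hgv0 ⟨N + 1 - w, by omega⟩
    simp only [Pi.zero_apply, hgv] at hval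
    have hww : N + 1 - ((⟨N + 1 - w, by omega⟩ : Fin (N + 2)) : ℕ) = w := by
      simp only [Fin.val_mk]; omega
    rw [hww] at hval
    exact hval
  -- conclude constancy
  intro v hv t ht s hs
  have key : ∀ t' s', t' ∈ I → s' ∈ I → t' ≤ s' → D v t' = D v s' := by
    intro t' s' ht' hs' hle
    rcases eq_or_lt_of_le hle with heq | hlt
    · rw [heq]
    · have hIcc : Set.Icc t' s' ⊆ I := hI.out ht' hs'
      have hz : ∀ x ∈ Set.Icc t' s', HasDerivWithinAt (D v) 0 (Set.Icc t' s') x := by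
        intro x hx
        have hxI : x ∈ I := hIcc hx
        have hud : UniqueDiffWithinAt ℝ I x := ((uniqueDiffOn_Icc hlt) x hx).mono hIcc
        have hd0 := derzero x hxI hud v hv
        have hD := (hDdiff v hv x hxI).hasDerivWithinAt
        rw [hd0] at hD
        exact hD.mono hIcc
      have hbd : ∀ x ∈ Set.Icc t' s', ‖(fun _ : ℝ => (0 : ℂ)) x‖ ≤ 0 := by
        intro x _; simp
      have hest := Convex.norm_image_sub_le_of_norm_hasDerivWithin_le
        (f' := fun _ : ℝ => (0 : ℂ)) hz hbd (convex_Icc t' s')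
        (Set.left_mem_Icc.mpr hle) (Set.right_mem_Icc.mpr hle)
      rw [zero_mul] at hest
      have : D v s' - D v t' = 0 := by
        have := norm_le_zero_iff.mp hest
        exact this
      exact (sub_eq_zero.mp this).symm
  rcases le_total t s with h | h
  · exact key t s ht hs h
  · exact (key s t hs ht h).symm
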